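/- arXiv:1706.01928 — 2 statements merged into one kernel-verified Lean document; each statement's English description precedes it below -/
import Mathlib

section
/- Let ν ≥ 0 with ν ≠ 1, let x > 0, and let g : (0,∞) → ℝ be twice continuously differentiable with g(y) → 0 and g'(y) → 0 as y → ∞; assume moreover that the functions y ↦ y·|(B_ν g)(y)|, y ↦ y^ν·|(B_ν g)(y)| and y ↦ y^{ν−2}·|g(y)| are integrable on (x, ∞). Then the fractional Bessel integral of order 1 is a left inverse of the Bessel operator: (IB_{ν,-}^1 (B_ν g))(x) = g(x). -/
open MeasureTheory Set Filter

/-- Gauss hypergeometric function ₂F₁(a,b;c;z) defined by its power series. -/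
noncomputable def gaussHyp (a b c z : ℝ) : ℝ :=
  ∑' n : ℕ, ((ascPochhammer ℝ n).eval a * (ascPochhammer ℝ n).eval b /
    ((ascPochhammer ℝ n).eval c * (n.factorial : ℝ))) * z ^ n

/-- Fractional Bessel integral on the semiaxis. -/
noncomputable def IB (ν α : ℝ) (f : ℝ → ℝ) (x : ℝ) : ℝ :=
  (1 / Real.Gamma (2 * α)) *
    ∫ y in Ioi x, ((y ^ 2 - x ^ 2) / (2 * y)) ^ (2 * α - 1) *
      gaussHyp (α + (ν - 1) / 2) α (2 * α) (1 - x ^ 2 / y ^ 2) * f y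

/-- Bessel operator B_ν g = g'' + (ν/x) g'. -/
noncomputable def besselOp (ν : ℝ) (g : ℝ → ℝ) (x : ℝ) : ℝ :=
  deriv (deriv g) x + (ν / x) * deriv g x

noncomputable def pc (s : ℝ) (n : ℕ) : ℝ := (ascPochhammer ℝ n).eval s / n.factorial

lemma pc_zero (s : ℝ) : pc s 0 = 1 := by simp [pc]

lemma poch_succ (s : ℝ) (n : ℕ) :
    (ascPochhammer ℝ (n+1)).eval s = (ascPochhammer ℝ n).eval s * (s + n) := by
  rw [ascPochhammer_succ_right]; simp

lemma poch_succ_left (s : ℝ) (n : ℕ) :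
    (ascPochhammer ℝ (n+1)).eval s = s * (ascPochhammer ℝ n).eval (s + 1) := by
  rw [ascPochhammer_succ_left]; simp [Polynomial.eval_comp]

lemma pc_succ (s : ℝ) (n : ℕ) : pc s (n+1) = pc s n * (s + n) / (n + 1) := by
  unfold pc
  rw [poch_succ, Nat.factorial_succ, Nat.cast_mul, Nat.cast_add, Nat.cast_one]
  rw [div_mul_eq_mul_div, div_div, mul_comm ((n:ℝ)+1)]

lemma pc_bound (s : ℝ) : ∀ n : ℕ, |pc s n| ≤ ((n:ℝ)+1) ^ (⌈|s|⌉₊) := by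
  intro n
  induction n with
  | zero => simp [pc_zero]
  | succ n ih =>
    set m := ⌈|s|⌉₊ with hm
    have hn1 : (0:ℝ) < (n:ℝ)+1 := by positivity
    have hsm : |s| ≤ (m:ℝ) := Nat.le_ceil _
    have hinv : (0:ℝ) ≤ 1/((n:ℝ)+1) := by positivity
    have hb : (1 + (m:ℝ) * (1/((n:ℝ)+1))) ≤ (1 + 1/((n:ℝ)+1))^m :=
      one_add_mul_le_pow (by linarith) m
    have h2 : ((n:ℝ)+1)^m * (1 + (m:ℝ) * (1/((n:ℝ)+1))) ≤ ((n:ℝ)+2)^m := by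
      have e1 : ((n:ℝ)+2) = ((n:ℝ)+1) * (1 + 1/((n:ℝ)+1)) := by field_simp; ring
      rw [e1, mul_pow]
      exact mul_le_mul_of_nonneg_left hb (by positivity)
    have h3 : ((n:ℝ)+1)^m * (1 + (m:ℝ) * (1/((n:ℝ)+1))) = ((n:ℝ)+1)^m * (((n:ℝ)+1+m)/((n:ℝ)+1)) := by
      field_simp
    have key : |pc s (n+1)| ≤ ((n:ℝ)+1)^m * ((|s|+(n:ℝ))/((n:ℝ)+1)) := by
      rw [pc_succ, abs_div, abs_mul, abs_of_pos hn1]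
      rw [div_le_iff₀ hn1]
      have hnum : |pc s n| * |s + (n:ℝ)| ≤ ((n:ℝ)+1)^m * (|s|+(n:ℝ)) :=
        mul_le_mul ih ((abs_add_le _ _).trans (by simp)) (abs_nonneg _) (by positivity)
      calc |pc s n| * |s + (n:ℝ)| ≤ ((n:ℝ)+1)^m * (|s|+(n:ℝ)) := hnum
        _ = ((n:ℝ)+1)^m * ((|s|+(n:ℝ))/((n:ℝ)+1)) * ((n:ℝ)+1) := by field_simp

    push_cast
    calc |pc s (n+1)| ≤ ((n:ℝ)+1)^m * ((|s|+(n:ℝ))/((n:ℝ)+1)) := key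
      _ ≤ ((n:ℝ)+1)^m * ((((n:ℝ)+1+m))/((n:ℝ)+1)) := by
          refine mul_le_mul_of_nonneg_left ?_ (by positivity)
          exact div_le_div_of_nonneg_right (by linarith) hn1.le
      _ = ((n:ℝ)+1)^m * (1 + (m:ℝ) * (1/((n:ℝ)+1))) := by rw [h3]
      _ ≤ ((n:ℝ)+2)^m := h2
      _ = ((n:ℝ)+1+1)^m := by ring_nf

lemma summable_aux (m : ℕ) {r : ℝ} (h0 : 0 ≤ r) (h1 : r < 1) :
    Summable (fun n : ℕ => ((n:ℝ)+1)^m * r^n) := by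
  rcases eq_or_lt_of_le h0 with h|h
  · apply summable_of_ne_finset_zero (s := {0})
    intro n hn
    simp only [Finset.mem_singleton] at hn
    simp [← h, zero_pow hn]
  · have H : Summable (fun n : ℕ => ((n:ℝ))^m * r^n) :=
      summable_pow_mul_geometric_of_norm_lt_one m (by rwa [Real.norm_eq_abs, abs_of_nonneg h0])
    have H2 := (summable_nat_add_iff 1).mpr H
    have H3 := H2.mul_left r⁻¹
    refine H3.congr fun n => ?_
    push_cast
    rw [pow_succ]
    field_simp

lemma summable_master (s : ℝ) {r : ℝ} (h0 : 0 ≤ r) (h1 : r < 1) :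
    Summable (fun n : ℕ => ((n:ℝ)+1) * |pc s n| * r^n) := by
  refine Summable.of_nonneg_of_le (fun n => by positivity) (fun n => ?_)
    (summable_aux (⌈|s|⌉₊+1) h0 h1)
  calc ((n:ℝ)+1) * |pc s n| * r^n ≤ ((n:ℝ)+1) * ((n:ℝ)+1)^(⌈|s|⌉₊) * r^n := by
        gcongr
        exact pc_bound s n
    _ = ((n:ℝ)+1)^(⌈|s|⌉₊+1) * r^n := by ring

lemma summable_pc_pow (s : ℝ) {t : ℝ} (h0 : 0 ≤ t) (h1 : t < 1) :
    Summable (fun n : ℕ => pc s n * t^n) := by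
  refine Summable.of_norm (Summable.of_nonneg_of_le (fun n => norm_nonneg _) (fun n => ?_)
    (summable_master s h0 h1))
  rw [Real.norm_eq_abs, abs_mul, abs_pow, abs_of_nonneg h0]
  have h2 : (0:ℝ) ≤ t ^ n := by positivity
  nlinarith [abs_nonneg (pc s n), mul_nonneg (mul_nonneg (Nat.cast_nonneg (α := ℝ) n) (abs_nonneg (pc s n))) h2]

lemma summable_shift (s : ℝ) {t : ℝ} (h0 : 0 ≤ t) (h1 : t < 1) :
    Summable (fun n : ℕ => pc s n * ((n:ℝ) * t^(n-1))) := by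
  rw [← summable_nat_add_iff 1]
  refine Summable.of_norm (Summable.of_nonneg_of_le (fun n => norm_nonneg _) (fun n => ?_)
    ((summable_master s h0 h1).mul_left (|s|+1)))
  rw [Real.norm_eq_abs, Nat.add_sub_cancel]
  push_cast
  have hpc := pc_succ s n
  have hne : ((n:ℝ)+1) ≠ 0 := by positivity
  have habs : |pc s (n+1)| * ((n:ℝ)+1) = |pc s n| * |s + n| := by
    rw [hpc, abs_div, abs_mul, abs_of_pos (by positivity : (0:ℝ) < (n:ℝ)+1)]
    field_simp
  have hsn : |s + (n:ℝ)| ≤ (|s|+1) * ((n:ℝ)+1) := by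
    calc |s + (n:ℝ)| ≤ |s| + (n:ℝ) := by
          refine (abs_add_le _ _).trans ?_; simp
      _ ≤ (|s|+1) * ((n:ℝ)+1) := by nlinarith [abs_nonneg s, Nat.cast_nonneg (α := ℝ) n]
  have ht : (0:ℝ) ≤ t^n := by positivity
  calc |pc s (n+1) * (((n:ℝ)+1) * t^n)| = (|pc s (n+1)| * ((n:ℝ)+1)) * t^n := by
        rw [abs_mul, abs_mul, abs_pow, abs_of_nonneg h0,
          abs_of_pos (by positivity : (0:ℝ) < (n:ℝ)+1)]
        ring
    _ = (|pc s n| * |s + n|) * t^n := by rw [habs]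
    _ ≤ (|pc s n| * ((|s|+1) * ((n:ℝ)+1))) * t^n := by
        have := mul_le_mul_of_nonneg_left hsn (abs_nonneg (pc s n))
        nlinarith
    _ = (|s|+1) * (((n:ℝ)+1) * |pc s n| * t^n) := by ring

lemma binom_key (s : ℝ) {t : ℝ} (h0 : 0 ≤ t) (h1 : t < 1) :
    (1 - t) * (∑' n : ℕ, pc s n * ((n:ℝ) * t^(n-1)))
      = s * ∑' n : ℕ, pc s n * t^n := by
  have Sd := summable_shift s h0 h1
  have Sf := summable_pc_pow s h0 h1
  have Sn : Summable (fun n : ℕ => (n:ℝ) * (pc s n * t^n)) := by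
    refine Summable.of_norm (Summable.of_nonneg_of_le (fun n => norm_nonneg _) (fun n => ?_)
      (summable_master s h0 h1))
    rw [Real.norm_eq_abs, abs_mul, abs_mul, abs_pow, abs_of_nonneg h0,
      Nat.abs_cast]
    have ht : (0:ℝ) ≤ t^n := by positivity
    nlinarith [abs_nonneg (pc s n), pow_le_pow_left₀ h0 (le_of_lt h1) n]
  have Ssn : Summable (fun n : ℕ => (s + (n:ℝ)) * (pc s n * t^n)) :=
    ((Sf.mul_left s).add Sn).congr (fun n => by ring)
  have hD : (∑' n : ℕ, pc s n * ((n:ℝ) * t^(n-1)))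
      = ∑' n : ℕ, (s + (n:ℝ)) * (pc s n * t^n) := by
    rw [Summable.tsum_eq_zero_add Sd]
    simp only [Nat.cast_zero, zero_mul, mul_zero, zero_add]
    refine tsum_congr fun n => ?_
    have hne : ((n:ℝ)+1) ≠ 0 := by positivity
    rw [Nat.add_sub_cancel, pc_succ]
    push_cast
    field_simp
  have htD : t * (∑' n : ℕ, pc s n * ((n:ℝ) * t^(n-1)))
      = ∑' n : ℕ, (n:ℝ) * (pc s n * t^n) := by
    rw [← tsum_mul_left]
    refine tsum_congr fun n => ?_
    cases n with
    | zero => simp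
    | succ k =>
      rw [Nat.add_sub_cancel, pow_succ]
      push_cast
      ring
  rw [sub_mul, one_mul, htD, hD, ← Summable.tsum_sub Ssn Sn, ← tsum_mul_left]
  exact tsum_congr fun n => by ring

lemma binom (s : ℝ) {z : ℝ} (hz0 : 0 ≤ z) (hz1 : z < 1) :
    ∑' n : ℕ, pc s n * z ^ n = (1 - z) ^ (-s) := by
  set r : ℝ := (1+z)/2 with hr
  have hr0 : 0 < r := by rw [hr]; linarith
  have hr1 : r < 1 := by rw [hr]; linarith
  have hzr : z < r := by rw [hr]; linarith
  have hTsub : Icc 0 z ⊆ Ioo (-r) r :=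
    fun t ht => ⟨by simp only [mem_Icc] at ht; linarith [ht.1],
      lt_of_le_of_lt (by simp only [mem_Icc] at ht; exact ht.2) hzr⟩
  set F : ℝ → ℝ := fun t => ∑' n : ℕ, pc s n * t ^ n with hF
  set D : ℝ → ℝ := fun t => ∑' n : ℕ, pc s n * ((n:ℝ) * t ^ (n-1)) with hDdef
  have hFderiv : ∀ t ∈ Ioo (-r) r, HasDerivAt F (D t) t := by
    intro t ht
    refine hasDerivAt_tsum_of_isPreconnected
      (u := fun (n : ℕ) => ((n:ℝ)+1) * |pc s n| * r^n / r) (y₀ := 0)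
      ((summable_master s hr0.le hr1).div_const r) isOpen_Ioo
      (convex_Ioo _ _).isPreconnected
      (fun n y _ => (hasDerivAt_pow n y).const_mul (pc s n)) ?_ ?_ ?_ ht
    · intro n y hy
      have hyr : |y| ≤ r := by
        rw [abs_le]; exact ⟨hy.1.le, hy.2.le⟩
      rw [Real.norm_eq_abs]
      cases n with
      | zero => simp; positivity
      | succ k =>
        beta_reduce
        have hre : r^(k+1)/r = r^k := by rw [pow_succ]; field_simp
        have he : ((k+1:ℕ):ℝ) + 1 = (k:ℝ)+2 := by push_cast; ring
        rw [he, mul_div_assoc, hre, Nat.add_sub_cancel, abs_mul, abs_mul, abs_pow, Nat.abs_cast]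
        push_cast
        have h1 : |y|^k ≤ r^k := pow_le_pow_left₀ (abs_nonneg y) hyr k
        have h2 : (0:ℝ) ≤ |pc s (k+1)| := abs_nonneg _
        calc |pc s (k+1)| * (((k:ℝ)+1) * |y|^k) ≤ |pc s (k+1)| * (((k:ℝ)+2) * r^k) := by
              have : ((k:ℝ)+1) * |y|^k ≤ ((k:ℝ)+2) * r^k := by
                have : ((k:ℝ)+1) * |y|^k ≤ ((k:ℝ)+1) * r^k :=
                  mul_le_mul_of_nonneg_left h1 (by positivity)
                nlinarith [pow_nonneg hr0.le k]
              exact mul_le_mul_of_nonneg_left this h2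
          _ = ((k:ℝ)+2) * |pc s (k+1)| * r^k := by ring
    · exact ⟨by linarith, hr0⟩
    · apply summable_of_ne_finset_zero (s := ({0} : Finset ℕ))
      intro n hn; simp only [Finset.mem_singleton] at hn
      simp [zero_pow hn]
  have key : ∀ t ∈ Icc 0 z, (1 - t) * D t = s * F t := fun t ht =>
    binom_key s ht.1 (lt_of_le_of_lt ht.2 hz1)
  set H : ℝ → ℝ := fun t => F t * (1 - t) ^ s with hH
  have hHderiv : ∀ t ∈ Icc 0 z, HasDerivAt H 0 t := by
    intro t ht
    have htT := hTsub ht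
    have h1t : 0 < 1 - t := by have := htT.2; linarith
    have hbase : HasDerivAt (fun u : ℝ => 1 - u) (-1) t := by
      simpa using (hasDerivAt_id t).const_sub 1
    have hR : HasDerivAt (fun u : ℝ => (1-u) ^ s) (s * (1-t)^(s-1) * (-1)) t := by
      have := (Real.hasDerivAt_rpow_const (x := 1-t) (p := s) (Or.inl h1t.ne')).comp t hbase
      exact this
    have hprod := (hFderiv t htT).mul hR
    have hval : D t * (1-t)^s + F t * (s * (1-t)^(s-1) * (-1)) = 0 := by
      have hpow : (1-t)^s = (1-t)^(s-1) * (1-t) := by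
        rw [← Real.rpow_add_one h1t.ne' (s-1)]; ring_nf
      rw [hpow]
      linear_combination ((1-t)^(s-1)) * (key t ht)
    exact hval ▸ hprod
  have hzz := constant_of_has_deriv_right_zero
      (fun t ht => (hHderiv t ht).continuousAt.continuousWithinAt)
      (fun t ht => (hHderiv t (Ico_subset_Icc_self ht)).hasDerivWithinAt) z
      (right_mem_Icc.mpr hz0)
  have hF0 : F 0 = 1 := by
    rw [hF]
    simp only []
    rw [tsum_eq_single 0 (fun n hn => by simp [zero_pow hn])]
    simp [pc_zero]
  have hH0 : H 0 = 1 := by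
    rw [hH]; simp only []
    rw [hF0, sub_zero, Real.one_rpow, mul_one]
  have hHz : F z * (1 - z)^s = 1 := by
    have : H z = H 0 := hzz
    rw [hH0] at this
    simpa [hH] using this
  have hpos : (0:ℝ) < 1 - z := by linarith
  have hc : (1-z)^s ≠ 0 := (Real.rpow_pos_of_pos hpos s).ne'
  have hFz : F z = ((1-z)^s)⁻¹ := eq_inv_of_mul_eq_one_left hHz
  rw [Real.rpow_neg hpos.le]
  exact hFz

lemma poch_eval_one (n : ℕ) : (ascPochhammer ℝ n).eval 1 = n.factorial := by
  induction n with
  | zero => simp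
  | succ n ih =>
    rw [ascPochhammer_succ_right]
    simp only [Polynomial.eval_mul, Polynomial.eval_add, Polynomial.eval_X,
      Polynomial.eval_natCast, ih, Nat.factorial_succ]
    push_cast; ring

lemma poch_eval_two (n : ℕ) : (ascPochhammer ℝ n).eval 2 = (n+1).factorial := by
  have := poch_succ_left 1 n
  rw [poch_eval_one (n+1)] at this
  have h12 : (1:ℝ) + 1 = 2 := by norm_num
  rw [h12] at this
  linarith [this]

lemma gaussHyp_eq (s : ℝ) (hs : s ≠ 0) {z : ℝ} (h0 : 0 < z) (h1 : z < 1) :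
    gaussHyp (s+1) 1 2 z = ((1-z)^(-s) - 1)/(s*z) := by
  have hG : gaussHyp (s+1) 1 2 z = ∑' n : ℕ, pc s (n+1) / s * z^n := by
    unfold gaussHyp
    refine tsum_congr fun n => ?_
    rw [poch_eval_one, poch_eval_two]
    unfold pc
    rw [poch_succ_left]
    have hf1 : ((n.factorial : ℝ)) ≠ 0 := Nat.cast_ne_zero.mpr n.factorial_ne_zero
    have hf2 : (((n+1).factorial : ℝ)) ≠ 0 := Nat.cast_ne_zero.mpr (n+1).factorial_ne_zero
    field_simp
  have hb := binom s h0.le h1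
  have hsum := summable_pc_pow s h0.le h1
  rw [Summable.tsum_eq_zero_add hsum, pc_zero, pow_zero, one_mul] at hb
  have hshift : ∑' n : ℕ, pc s (n+1) * z^(n+1) = (s * z) * ∑' n : ℕ, pc s (n+1) / s * z^n := by
    rw [← tsum_mul_left]
    refine tsum_congr fun n => ?_
    rw [pow_succ]
    field_simp
  rw [hshift] at hb
  rw [hG]
  have hsz : s * z ≠ 0 := mul_ne_zero hs h0.ne'
  rw [eq_div_iff hsz]
  linarith [hb]

lemma kernel_eq {ν x y : ℝ} (hν1 : ν ≠ 1) (hx : 0 < x) (hxy : x < y) :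
    (y^2 - x^2)/(2*y) * gaussHyp (1 + (ν-1)/2) 1 2 (1 - x^2/y^2)
      = (x ^ (1-ν) * y ^ ν - y) / (ν - 1) := by
  have hy : 0 < y := hx.trans hxy
  have hy2 : (0:ℝ) < y^2 := by positivity
  have hx2y2 : x^2 < y^2 := by nlinarith
  set z : ℝ := 1 - x^2/y^2 with hz
  have hz0 : 0 < z := by rw [hz, sub_pos, div_lt_one hy2]; exact hx2y2
  have hz1 : z < 1 := by
    have h2 : 0 < x^2/y^2 := by positivity
    rw [hz]; linarith
  set s : ℝ := (ν-1)/2 with hsdef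
  have hs : s ≠ 0 := by
    rw [hsdef]
    intro h
    exact hν1 (by linarith [h] : ν = 1)
  have harg : 1 + (ν-1)/2 = s + 1 := by rw [hsdef]; ring
  rw [harg, gaussHyp_eq s hs hz0 hz1]
  have hxy0 : 0 < x/y := by positivity
  have h1z : 1 - z = (x/y)^2 := by rw [hz, div_pow]; ring
  have hrp : (1-z) ^ (-s) = (x/y) ^ (1-ν) := by
    rw [h1z, ← Real.rpow_natCast (x/y) 2, ← Real.rpow_mul hxy0.le]
    congr 1
    rw [hsdef]; push_cast; ring
  rw [hrp, Real.div_rpow hx.le hy.le]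
  have hC0 : (0:ℝ) < y^ν := Real.rpow_pos_of_pos hy ν
  have hBC : y^(1-ν) * y^ν = y := by
    rw [← Real.rpow_add hy]; norm_num
  have hBeq : y^(1-ν) = y / y^ν := by
    rw [eq_div_iff hC0.ne']; exact hBC
  rw [hBeq, hz, hsdef]
  have hne : ν - 1 ≠ 0 := sub_ne_zero_of_ne hν1
  have hyx2 : y^2 - x^2 ≠ 0 := by nlinarith
  field_simp

lemma tendsto_of_deriv_integrable {F ψ : ℝ → ℝ} {c : ℝ} (hc : 0 < c)
    (hd : ∀ y ∈ Ioi (0:ℝ), HasDerivAt F (ψ y) y)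
    (hψc : ContinuousOn ψ (Ioi (0:ℝ)))
    (hi : IntegrableOn ψ (Ioi c)) :
    Tendsto F atTop (nhds (F c + ∫ t in Ioi c, ψ t)) := by
  have key : ∀ R, c ≤ R → F R = F c + ∫ t in c..R, ψ t := by
    intro R hR
    have hsub : uIcc c R ⊆ Ioi (0:ℝ) := by
      rw [uIcc_of_le hR]; intro t ht; exact lt_of_lt_of_le hc ht.1
    rw [intervalIntegral.integral_eq_sub_of_hasDerivAt (fun t ht => hd t (hsub ht))
      ((hψc.mono hsub).intervalIntegrable)]
    ring
  have h2 : Tendsto (fun R => F c + ∫ t in c..R, ψ t) atTop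
      (nhds (F c + ∫ t in Ioi c, ψ t)) :=
    tendsto_const_nhds.add (intervalIntegral_tendsto_integral_Ioi c hi tendsto_id)
  refine Tendsto.congr' ?_ h2
  filter_upwards [eventually_ge_atTop c] with R hR
  exact (key R hR).symm

lemma aux_pos_log (h h' : ℝ → ℝ)
    (hd : ∀ y ∈ Ioi (0:ℝ), HasDerivAt h (h' y) y)
    (hdc : ContinuousOn h' (Ioi (0:ℝ)))
    (h0 : Tendsto h atTop (nhds 0)) {M : ℝ} (hM : 0 < M)
    (hlim : Tendsto (fun y => y * h' y) atTop (nhds M)) : False := by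
  obtain ⟨Y, hY⟩ := eventually_atTop.mp
    ((hlim.eventually (Ioi_mem_nhds (half_lt_self hM))).and (eventually_ge_atTop (1:ℝ)))
  set Y1 : ℝ := max Y 1 with hY1def
  have hY1 : (1:ℝ) ≤ Y1 := le_max_right _ _
  have hY1pos : (0:ℝ) < Y1 := by linarith
  have hprop : ∀ t, Y1 ≤ t → M/2 * t⁻¹ ≤ h' t := by
    intro t ht
    have h1t : (1:ℝ) ≤ t := le_trans hY1 ht
    have h0t : (0:ℝ) < t := by linarith
    have hmem := (hY t (le_trans (le_max_left _ _) ht)).1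
    rw [← div_eq_mul_inv, div_le_iff₀ h0t]
    nlinarith
  have hlow : ∀ Z, Y1 ≤ Z → h Y1 + M/2 * Real.log (Z/Y1) ≤ h Z := by
    intro Z hZ
    have hZpos : 0 < Z := lt_of_lt_of_le hY1pos hZ
    have hsub : uIcc Y1 Z ⊆ Ioi (0:ℝ) := by
      rw [uIcc_of_le hZ]; intro t ht; exact lt_of_lt_of_le hY1pos ht.1
    have hFTC : ∫ t in Y1..Z, h' t = h Z - h Y1 :=
      intervalIntegral.integral_eq_sub_of_hasDerivAt (fun t ht => hd t (hsub ht))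
        ((hdc.mono hsub).intervalIntegrable)
    have hint1 : IntervalIntegrable (fun t => M/2 * t⁻¹) volume Y1 Z := by
      apply ContinuousOn.intervalIntegrable
      exact continuousOn_const.mul ((continuousOn_id.inv₀ (fun t ht => ne_of_gt (hsub ht))))
    have hmono : ∫ t in Y1..Z, M/2 * t⁻¹ ≤ ∫ t in Y1..Z, h' t := by
      apply intervalIntegral.integral_mono_on hZ hint1 ((hdc.mono hsub).intervalIntegrable)
      intro t ht
      exact hprop t ht.1
    rw [intervalIntegral.integral_const_mul, integral_inv_of_pos hY1pos hZpos] at hmono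
    rw [hFTC] at hmono
    linarith
  have hb : Tendsto (fun Z => h Y1 + M/2 * Real.log (Z/Y1)) atTop atTop := by
    refine tendsto_atTop_add_const_left _ _ ?_
    refine Tendsto.const_mul_atTop (by linarith : (0:ℝ) < M/2) ?_
    exact Real.tendsto_log_atTop.comp (tendsto_id.atTop_div_const hY1pos)
  have htop : Tendsto h atTop atTop :=
    tendsto_atTop_mono' atTop ((eventually_ge_atTop Y1).mono fun Z hZ => hlow Z hZ) hb
  exact absurd htop (not_tendsto_atTop_of_tendsto_nhds h0)

lemma aux_pos_rpow (h h' : ℝ → ℝ) {q : ℝ} (hq : 1 < q)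
    (hd : ∀ y ∈ Ioi (0:ℝ), HasDerivAt h (h' y) y)
    (hdc : ContinuousOn h' (Ioi (0:ℝ)))
    (h0 : Tendsto h atTop (nhds 0)) {M : ℝ} (hM : 0 < M)
    (hlim : Tendsto (fun y => y ^ q * h' y) atTop (nhds M)) :
    ∃ Y : ℝ, 1 ≤ Y ∧ ∀ y, Y ≤ y → h y ≤ -(M/2 * y^(1-q) / (q-1)) := by
  obtain ⟨Y, hY⟩ := eventually_atTop.mp
    ((hlim.eventually (Ioi_mem_nhds (half_lt_self hM))).and (eventually_ge_atTop (1:ℝ)))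
  set Y1 : ℝ := max Y 1 with hY1def
  have hY1 : (1:ℝ) ≤ Y1 := le_max_right _ _
  refine ⟨Y1, hY1, fun y hy => ?_⟩
  have hy1 : (1:ℝ) ≤ y := le_trans hY1 hy
  have hy0 : (0:ℝ) < y := by linarith
  have hprop : ∀ t, y ≤ t → M/2 * t^(-q) ≤ h' t := by
    intro t ht
    have h1t : (1:ℝ) ≤ t := le_trans hy1 ht
    have h0t : (0:ℝ) < t := by linarith
    have hmem := (hY t (le_trans (le_max_left _ _) (le_trans hy ht))).1
    have hpow : (0:ℝ) < t ^ q := Real.rpow_pos_of_pos h0t q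
    rw [Real.rpow_neg h0t.le, ← div_eq_mul_inv, div_le_iff₀ hpow]
    nlinarith
  have hlow : ∀ Z, y ≤ Z → h y + M/2 * ((y^(1-q) - Z^(1-q))/(q-1)) ≤ h Z := by
    intro Z hZ
    have hZpos : 0 < Z := lt_of_lt_of_le hy0 hZ
    have hsub : uIcc y Z ⊆ Ioi (0:ℝ) := by
      rw [uIcc_of_le hZ]; intro t ht; exact lt_of_lt_of_le hy0 ht.1
    have hFTC : ∫ t in y..Z, h' t = h Z - h y :=
      intervalIntegral.integral_eq_sub_of_hasDerivAt (fun t ht => hd t (hsub ht))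
        ((hdc.mono hsub).intervalIntegrable)
    have hint1 : IntervalIntegrable (fun t => M/2 * t^(-q)) volume y Z := by
      apply ContinuousOn.intervalIntegrable
      refine continuousOn_const.mul (ContinuousOn.rpow_const continuousOn_id
        (fun t ht => Or.inl (ne_of_gt (hsub ht))))
    have hmono : ∫ t in y..Z, M/2 * t^(-q) ≤ ∫ t in y..Z, h' t := by
      apply intervalIntegral.integral_mono_on hZ hint1 ((hdc.mono hsub).intervalIntegrable)
      intro t ht
      exact hprop t ht.1
    have hval : ∫ t in y..Z, M/2 * t^(-q) = M/2 * ((y^(1-q) - Z^(1-q))/(q-1)) := by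
      rw [intervalIntegral.integral_const_mul, integral_rpow]
      · congr 1
        have hne : q - 1 ≠ 0 := by intro hc; exact absurd (by linarith : q = 1) (ne_of_gt hq)
        have h1q : (1:ℝ) - q ≠ 0 := by intro hc; apply hne; linarith
        rw [show -q + 1 = 1 - q by ring]
        rw [div_eq_div_iff h1q hne]
        ring
      · right
        constructor
        · intro hc; apply absurd (by linarith : q = 1) (ne_of_gt hq)
        · intro hc
          exact absurd (hsub hc) (by simp)
    rw [hval, hFTC] at hmono
    linarith
  have hZ0 : Tendsto (fun Z : ℝ => Z^(1-q)) atTop (nhds 0) := by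
    have := tendsto_rpow_neg_atTop (by linarith : (0:ℝ) < q - 1)
    simpa [show -(q-1) = 1-q by ring] using this
  have hlimA : Tendsto (fun Z => h y + M/2 * ((y^(1-q) - Z^(1-q))/(q-1))) atTop
      (nhds (h y + M/2 * ((y^(1-q) - 0)/(q-1)))) :=
    tendsto_const_nhds.add ((((tendsto_const_nhds.sub hZ0).div_const _).const_mul _))
  have hfin := le_of_tendsto_of_tendsto hlimA h0
    ((eventually_ge_atTop y).mono fun Z hZ => hlow Z hZ)
  rw [sub_zero] at hfin
  have : M/2 * (y^(1-q)/(q-1)) = M/2 * y^(1-q)/(q-1) := by ring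
  linarith [hfin]

theorem IB_one_left_inverse (ν : ℝ) (hν : 0 ≤ ν) (hν1 : ν ≠ 1) (x : ℝ) (hx : 0 < x)
    (g : ℝ → ℝ) (hg : ContDiffOn ℝ 2 g (Ioi (0 : ℝ)))
    (hg0 : Tendsto g atTop (nhds 0)) (hg0' : Tendsto (deriv g) atTop (nhds 0))
    (hint1 : IntegrableOn (fun y => y * |besselOp ν g y|) (Ioi x))
    (hint2 : IntegrableOn (fun y => y ^ ν * |besselOp ν g y|) (Ioi x))
    (hint3 : IntegrableOn (fun y => y ^ (ν - 2) * |g y|) (Ioi x)) :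
    IB ν 1 (besselOp ν g) x = g x := by
  set f : ℝ → ℝ := besselOp ν g with hfd
  have hfeq : ∀ y : ℝ, f y = deriv (deriv g) y + (ν/y) * deriv g y := fun y => rfl
  have hne1 : (1:ℝ) - ν ≠ 0 := sub_ne_zero_of_ne (Ne.symm hν1)
  have hne2 : ν - 1 ≠ 0 := sub_ne_zero_of_ne hν1
  -- differentiability facts
  have hgd : ∀ y ∈ Ioi (0:ℝ), HasDerivAt g (deriv g y) y := fun y hy =>
    ((hg.differentiableOn (by norm_num)).differentiableAt (isOpen_Ioi.mem_nhds hy)).hasDerivAt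
  have hg1 : ContDiffOn ℝ 1 (deriv g) (Ioi (0:ℝ)) :=
    hg.deriv_of_isOpen isOpen_Ioi (by norm_num)
  have hgd' : ∀ y ∈ Ioi (0:ℝ), HasDerivAt (deriv g) (deriv (deriv g) y) y := fun y hy =>
    ((hg1.differentiableOn one_ne_zero).differentiableAt (isOpen_Ioi.mem_nhds hy)).hasDerivAt
  have hg1cont : ContinuousOn (deriv g) (Ioi (0:ℝ)) := hg1.continuousOn
  have hg2cont : ContinuousOn (deriv (deriv g)) (Ioi (0:ℝ)) :=
    hg1.continuousOn_deriv_of_isOpen isOpen_Ioi le_rfl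
  have hfcont : ContinuousOn f (Ioi (0:ℝ)) := by
    have : ContinuousOn (fun y => deriv (deriv g) y + (ν/y) * deriv g y) (Ioi (0:ℝ)) :=
      hg2cont.add ((continuousOn_const.div continuousOn_id
        (fun y hy => ne_of_gt hy)).mul hg1cont)
    exact this.congr fun y _ => hfeq y
  have hfmeas : Measurable f := by
    have : Measurable (fun y => deriv (deriv g) y + (ν/y) * deriv g y) :=
      (measurable_deriv _).add ((measurable_const.div measurable_id).mul (measurable_deriv _))
    exact this
  -- u and w
  set u : ℝ → ℝ := fun y => (y ^ (1-ν) - x ^ (1-ν)) / (1-ν) with hudef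
  set w : ℝ → ℝ := fun y => y ^ ν * deriv g y with hwdef
  set v : ℝ → ℝ := fun y => y * deriv g y with hvdef
  have hu : ∀ y ∈ Ioi (0:ℝ), HasDerivAt u (y ^ (-ν)) y := by
    intro y hy
    have h1 : HasDerivAt (fun t : ℝ => t ^ (1-ν)) ((1-ν) * y^(1-ν-1)) y :=
      Real.hasDerivAt_rpow_const (Or.inl (ne_of_gt hy))
    have h2 := (h1.sub_const (x ^ (1-ν))).div_const (1-ν)
    convert h2 using 1
    · rfl
    · rfl
    rw [show (1-ν-1) = -ν by ring]
    field_simp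
  have hw : ∀ y ∈ Ioi (0:ℝ), HasDerivAt w (y ^ ν * f y) y := by
    intro y hy
    have hy0 : (0:ℝ) < y := hy
    have h1 : HasDerivAt (fun t : ℝ => t ^ ν) (ν * y^(ν-1)) y :=
      Real.hasDerivAt_rpow_const (Or.inl hy0.ne')
    have h2 := h1.mul (hgd' y hy)
    convert h2 using 1
    · rfl
    · rfl
    · rfl
    rw [hfeq y, Real.rpow_sub hy0, Real.rpow_one]
    field_simp
    ring
  have hv : ∀ y ∈ Ioi (0:ℝ), HasDerivAt v ((1-ν) * deriv g y + y * f y) y := by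
    intro y hy
    have hy0 : (0:ℝ) < y := hy
    have h2 := (hasDerivAt_id y).mul (hgd' y hy)
    convert h2 using 1
    · rfl
    · rfl
    · rfl
    rw [hfeq y]
    field_simp
    simp only [id_eq]
    ring
  -- integrability of t * f t and t ^ ν * f t and u * (t^ν f)
  have habs1 : ∀ᵐ y ∂(volume.restrict (Ioi x)), ‖y * f y‖ ≤ y * |f y| := by
    filter_upwards [ae_restrict_mem measurableSet_Ioi] with y hy
    have : (0:ℝ) < y := lt_trans hx hy
    rw [Real.norm_eq_abs, abs_mul, abs_of_pos this]
  have hrpowcont : ContinuousOn (fun y : ℝ => y ^ ν) (Ioi x) := by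
    refine ContinuousOn.rpow_const continuousOn_id fun y hy => Or.inl (ne_of_gt (lt_trans hx hy))
  have hItf : IntegrableOn (fun t => t * f t) (Ioi x) := by
    refine Integrable.mono' hint1 ?_ habs1
    exact (continuousOn_id.aestronglyMeasurable measurableSet_Ioi).mul
      (hfmeas.aestronglyMeasurable.restrict)
  have hIνf : IntegrableOn (fun t => t ^ ν * f t) (Ioi x) := by
    refine Integrable.mono' hint2 ?_ ?_
    · exact (hrpowcont.aestronglyMeasurable measurableSet_Ioi).mul
        (hfmeas.aestronglyMeasurable.restrict)
    · filter_upwards [ae_restrict_mem measurableSet_Ioi] with y hy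
      have hy0 : (0:ℝ) < y := lt_trans hx hy
      rw [Real.norm_eq_abs, abs_mul, abs_of_pos (Real.rpow_pos_of_pos hy0 ν)]
  have huyν : ∀ y : ℝ, 0 < y → u y * y ^ ν = (x^(1-ν) * y^ν - y)/(ν-1) := by
    intro y hy0
    have h1 : y^(1-ν) * y^ν = y := by
      rw [← Real.rpow_add hy0]; norm_num
    rw [hudef]
    beta_reduce
    rw [div_mul_eq_mul_div, sub_mul, h1, div_eq_div_iff hne1 hne2]
    ring
  have hucont : ContinuousOn u (Ioi x) := by
    refine ContinuousOn.div_const ?_ _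
    refine ContinuousOn.sub ?_ continuousOn_const
    exact ContinuousOn.rpow_const continuousOn_id fun y hy => Or.inl (ne_of_gt (lt_trans hx hy))
  have Iuw : IntegrableOn (fun t => u t * (t ^ ν * f t)) (Ioi x) := by
    refine Integrable.mono'
      ((hint1.const_mul (1/|ν-1|)).add (hint2.const_mul (x^(1-ν)/|ν-1|))) ?_ ?_
    · exact (hucont.aestronglyMeasurable measurableSet_Ioi).mul
        ((hrpowcont.aestronglyMeasurable measurableSet_Ioi).mul
          (hfmeas.aestronglyMeasurable.restrict))
    · filter_upwards [ae_restrict_mem measurableSet_Ioi] with y hy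
      have hy0 : (0:ℝ) < y := lt_trans hx hy
      have hyν : (0:ℝ) < y ^ ν := Real.rpow_pos_of_pos hy0 ν
      have hxν : (0:ℝ) < x ^ (1-ν) := Real.rpow_pos_of_pos hx _
      have hv1 : ‖u y * (y ^ ν * f y)‖ = |u y * y ^ ν| * |f y| := by
        rw [Real.norm_eq_abs, ← mul_assoc, abs_mul]
      rw [hv1, huyν y hy0, abs_div]
      have hnum : |x^(1-ν) * y^ν - y| ≤ x^(1-ν) * y^ν + y := by
        refine (abs_sub _ _).trans ?_
        rw [abs_of_pos (by positivity), abs_of_pos hy0]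
      calc |x^(1-ν) * y^ν - y|/|ν-1| * |f y|
          ≤ (x^(1-ν) * y^ν + y)/|ν-1| * |f y| := by
            gcongr
        _ = 1/|ν-1| * (y * |f y|) + x^(1-ν)/|ν-1| * (y^ν * |f y|) := by ring
    -- limit of v
  have hψvcont : ContinuousOn (fun t : ℝ => (1-ν) * deriv g t + t * f t) (Ioi (0:ℝ)) :=
    (continuousOn_const.mul hg1cont).add (continuousOn_id.mul hfcont)
  have hvkey : ∀ R, x ≤ R → v R = v x + ((1-ν)*(g R - g x) + ∫ t in x..R, t * f t) := by
    intro R hR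
    have hsub : uIcc x R ⊆ Ioi (0:ℝ) := by
      rw [uIcc_of_le hR]; intro t ht; exact lt_of_lt_of_le hx ht.1
    have h1 : ∫ t in x..R, ((1-ν) * deriv g t + t * f t) = v R - v x :=
      intervalIntegral.integral_eq_sub_of_hasDerivAt (fun t ht => hv t (hsub ht))
        ((hψvcont.mono hsub).intervalIntegrable)
    have hIa : IntervalIntegrable (fun t => (1-ν) * deriv g t) volume x R :=
      ((continuousOn_const.mul hg1cont).mono hsub).intervalIntegrable
    have hIb : IntervalIntegrable (fun t => t * f t) volume x R :=
      ((continuousOn_id.mul hfcont).mono hsub).intervalIntegrable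
    have h2 : ∫ t in x..R, ((1-ν) * deriv g t + t * f t)
        = (1-ν) * (g R - g x) + ∫ t in x..R, t * f t := by
      rw [intervalIntegral.integral_add hIa hIb, intervalIntegral.integral_const_mul,
        intervalIntegral.integral_eq_sub_of_hasDerivAt (fun t ht => hgd t (hsub ht))
          ((hg1cont.mono hsub).intervalIntegrable)]
    linarith [h1, h2]
  have hvlim : Tendsto v atTop (nhds (v x + ((1-ν)*(0 - g x) + ∫ t in Ioi x, t * f t))) := by
    refine Tendsto.congr' ?_ (tendsto_const_nhds.add
      (((hg0.sub_const (g x)).const_mul (1-ν)).add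
        (intervalIntegral_tendsto_integral_Ioi x hItf tendsto_id)))
    filter_upwards [eventually_ge_atTop x] with R hR
    exact (hvkey R hR).symm
  set Mv : ℝ := v x + ((1-ν)*(0 - g x) + ∫ t in Ioi x, t * f t) with hMvdef
  have hMv : Mv = 0 := by
    rcases lt_trichotomy Mv 0 with hM|hM|hM
    · exfalso
      refine aux_pos_log (fun y => -g y) (fun y => -deriv g y)
        (fun y hy => (hgd y hy).neg) hg1cont.neg (by simpa using hg0.neg) (M := -Mv)
        (by linarith) ?_
      refine Tendsto.congr (fun y => ?_) hvlim.neg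
      rw [hvdef]; ring
    · exact hM
    · exact absurd (Tendsto.congr (fun y => by rw [hvdef]) hvlim)
        (fun h => aux_pos_log g (deriv g) hgd hg1cont hg0 hM h)
  have hv0 : Tendsto v atTop (nhds 0) := hMv ▸ hvlim
  -- limit of w
  have hψwcont : ContinuousOn (fun t : ℝ => t ^ ν * f t) (Ioi (0:ℝ)) :=
    (ContinuousOn.rpow_const continuousOn_id fun t ht => Or.inl (ne_of_gt ht)).mul hfcont
  have hwlim : Tendsto w atTop (nhds (w x + ∫ t in Ioi x, t ^ ν * f t)) :=
    tendsto_of_deriv_integrable hx hw hψwcont hIνf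
  set L : ℝ := w x + ∫ t in Ioi x, t ^ ν * f t with hLdef
  have hcontra : ∀ c : ℝ, 0 < c → ∀ Y : ℝ, 1 ≤ Y →
      (∀ y, Y ≤ y → c * y^(1-ν) ≤ |g y|) → False := by
    intro c hc Y hY hbd
    set a : ℝ := max x Y with hadef
    have ha0 : (0:ℝ) < a := lt_of_lt_of_le hx (le_max_left _ _)
    have hIa : IntegrableOn (fun y => y ^ (ν-2) * |g y|) (Ioi a) :=
      hint3.mono_set (Ioi_subset_Ioi (le_max_left _ _))
    have h2 : IntegrableOn (fun y => c * y^(-1:ℝ)) (Ioi a) := by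
      refine Integrable.mono' hIa ?_ ?_
      · exact ((continuousOn_const.mul (ContinuousOn.rpow_const continuousOn_id
          (fun y hy => Or.inl (ne_of_gt (lt_trans ha0 hy))))).aestronglyMeasurable
            measurableSet_Ioi)
      · filter_upwards [ae_restrict_mem measurableSet_Ioi] with y hy
        have hy0 : (0:ℝ) < y := lt_trans ha0 hy
        have hyY : Y ≤ y := le_trans (le_max_right _ _) (le_of_lt hy)
        have hb := hbd y hyY
        rw [Real.norm_eq_abs, abs_of_pos (by positivity : (0:ℝ) < c * y^(-1:ℝ))]
        have hsplit : c * y^(-1:ℝ) = (c * y^(1-ν)) * y^(ν-2) := by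
          rw [mul_assoc, ← Real.rpow_add hy0]; norm_num
        rw [hsplit]
        calc (c * y^(1-ν)) * y^(ν-2) ≤ |g y| * y^(ν-2) :=
              mul_le_mul_of_nonneg_right hb (Real.rpow_nonneg hy0.le _)
          _ = y^(ν-2) * |g y| := by ring
    have h3 : IntegrableOn (fun y => y^(-1:ℝ)) (Ioi a) := by
      have h4 := h2.const_mul c⁻¹
      refine h4.congr (ae_of_all _ fun y => ?_)
      field_simp
    rw [integrableOn_Ioi_rpow_iff ha0] at h3
    norm_num at h3
  have hw0 : Tendsto w atTop (nhds 0) := by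
    rcases le_or_gt ν 1 with hcase | hcase
    · have hv0abs : Tendsto (fun R => |v R|) atTop (nhds 0) := by
        have := hv0.abs; simpa using this
      have hv0absneg : Tendsto (fun R => -|v R|) atTop (nhds 0) := by
        have := hv0abs.neg; simpa using this
      have hbound : ∀ᶠ R in atTop, |w R| ≤ |v R| := by
        filter_upwards [eventually_ge_atTop (1:ℝ)] with R hR
        have hR0 : (0:ℝ) < R := by linarith
        have heq : w R = R ^ (ν-1) * v R := by
          rw [hwdef, hvdef]
          beta_reduce
          rw [Real.rpow_sub hR0, Real.rpow_one]
          field_simp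
        rw [heq, abs_mul]
        have h1 : |R ^ (ν-1)| ≤ 1 := by
          rw [abs_of_pos (Real.rpow_pos_of_pos hR0 _)]
          exact Real.rpow_le_one_of_one_le_of_nonpos hR (by linarith)
        nlinarith [abs_nonneg (v R), abs_nonneg (R ^ (ν-1))]
      refine tendsto_of_tendsto_of_tendsto_of_le_of_le' hv0absneg hv0abs ?_ ?_
      · filter_upwards [hbound] with R hR
        linarith [neg_abs_le (w R)]
      · filter_upwards [hbound] with R hR
        linarith [le_abs_self (w R)]
    · have hL0 : L = 0 := by
        rcases lt_trichotomy L 0 with hL|hL|hL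
        · obtain ⟨Y, hY1, hbd⟩ := aux_pos_rpow (fun y => -g y) (fun y => -deriv g y) hcase
            (fun y hy => (hgd y hy).neg) hg1cont.neg (by simpa using hg0.neg) (M := -L)
            (by linarith)
            (Tendsto.congr (fun y => by rw [hwdef]; beta_reduce; ring) hwlim.neg)
          exfalso
          refine hcontra ((-L)/2/(ν-1)) (div_pos (by linarith) (by linarith)) Y hY1 (fun y hy => ?_)
          have hb := hbd y hy
          have he : (-L)/2 * y^(1-ν)/(ν-1) = (-L)/2/(ν-1) * y^(1-ν) := by ring
          have h2 : (-L)/2/(ν-1) * y^(1-ν) ≤ g y := by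
            rw [← he]; linarith
          calc (-L)/2/(ν-1) * y^(1-ν) ≤ g y := h2
            _ ≤ |g y| := le_abs_self _
        · exact hL
        · obtain ⟨Y, hY1, hbd⟩ := aux_pos_rpow g (deriv g) hcase hgd hg1cont hg0 (M := L) hL
            (Tendsto.congr (fun y => by rw [hwdef]) hwlim)
          exfalso
          refine hcontra (L/2/(ν-1)) (div_pos (by linarith) (by linarith)) Y hY1 (fun y hy => ?_)
          have hb := hbd y hy
          have he : L/2 * y^(1-ν)/(ν-1) = L/2/(ν-1) * y^(1-ν) := by ring
          have h2 : L/2/(ν-1) * y^(1-ν) ≤ -g y := by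
            rw [← he]; linarith
          calc L/2/(ν-1) * y^(1-ν) ≤ -g y := h2
            _ ≤ |g y| := neg_le_abs _
      rw [hL0] at hwlim
      exact hwlim
  -- u R w R → 0
  have hU : Tendsto (fun R => u R * w R) atTop (nhds 0) := by
    have h2 : Tendsto (fun R => (v R - x^(1-ν) * w R)/(1-ν)) atTop
        (nhds ((0 - x^(1-ν)*0)/(1-ν))) := (hv0.sub (hw0.const_mul _)).div_const _
    have h3 : ((0:ℝ) - x^(1-ν)*0)/(1-ν) = 0 := by norm_num
    rw [h3] at h2
    refine Tendsto.congr' ?_ h2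
    filter_upwards [eventually_gt_atTop (0:ℝ)] with R hR
    have h4 : R^(1-ν) * R^ν = R := by rw [← Real.rpow_add hR]; norm_num
    rw [hudef, hwdef, hvdef]
    beta_reduce
    field_simp
    linear_combination (-(deriv g R)) * h4
  -- integration by parts
  have hparts : ∀ R, x < R → ∫ t in x..R, u t * (t^ν * f t) = u R * w R - (g R - g x) := by
    intro R hR
    have hsub : uIcc x R ⊆ Ioi (0:ℝ) := by
      rw [uIcc_of_le hR.le]; intro t ht; exact lt_of_lt_of_le hx ht.1
    have hIu' : IntervalIntegrable (fun t => t ^ (-ν)) volume x R :=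
      ContinuousOn.intervalIntegrable (ContinuousOn.rpow_const continuousOn_id
        fun t ht => Or.inl (ne_of_gt (hsub ht)))
    have hIw' : IntervalIntegrable (fun t => t ^ ν * f t) volume x R :=
      ContinuousOn.intervalIntegrable ((ContinuousOn.rpow_const continuousOn_id
        fun t ht => Or.inl (ne_of_gt (hsub ht))).mul (hfcont.mono hsub))
    have hibp := intervalIntegral.integral_mul_deriv_eq_deriv_mul
      (fun t ht => hu t (hsub ht)) (fun t ht => hw t (hsub ht)) hIu' hIw'
    have hux : u x = 0 := by rw [hudef]; beta_reduce; rw [sub_self, zero_div]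
    have hlast : ∫ t in x..R, t^(-ν) * w t = g R - g x := by
      have hcongr : ∫ t in x..R, t^(-ν) * w t = ∫ t in x..R, deriv g t := by
        refine intervalIntegral.integral_congr fun t ht => ?_
        have ht0 : (0:ℝ) < t := hsub ht
        rw [hwdef]
        beta_reduce
        rw [← mul_assoc, ← Real.rpow_add ht0]
        norm_num
      rw [hcongr]
      exact intervalIntegral.integral_eq_sub_of_hasDerivAt (fun t ht => hgd t (hsub ht))
        ((hg1cont.mono hsub).intervalIntegrable)
    rw [hibp, hux, zero_mul, hlast]
    ring
  have hT1 : Tendsto (fun R => ∫ t in x..R, u t * (t^ν * f t)) atTop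
      (nhds (∫ t in Ioi x, u t * (t^ν * f t))) :=
    intervalIntegral_tendsto_integral_Ioi x Iuw tendsto_id
  have hT2 : Tendsto (fun R => u R * w R - (g R - g x)) atTop (nhds (0 - (0 - g x))) :=
    hU.sub (hg0.sub_const (g x))
  have hEv : (fun R => ∫ t in x..R, u t * (t^ν * f t))
      =ᶠ[atTop] (fun R => u R * w R - (g R - g x)) := by
    filter_upwards [eventually_gt_atTop x] with R hR
    exact hparts R hR
  have hval : ∫ t in Ioi x, u t * (t^ν * f t) = g x := by
    have := tendsto_nhds_unique (Tendsto.congr' hEv hT1) hT2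
    linarith [this]
  -- IB computation
  have hIB : IB ν 1 f x = ∫ y in Ioi x, u y * (y^ν * f y) := by
    unfold IB
    rw [show (2:ℝ) * 1 = 2 from by norm_num, Real.Gamma_two]
    rw [show (2:ℝ) - 1 = 1 from by norm_num]
    rw [show (1:ℝ)/1 = 1 from by norm_num, one_mul]
    refine setIntegral_congr_fun measurableSet_Ioi fun y hy => ?_
    have hxy : x < y := hy
    have hy0 : (0:ℝ) < y := lt_trans hx hxy
    rw [Real.rpow_one, kernel_eq hν1 hx hxy, ← huyν y hy0]
    ring
  rw [hIB, hval]
end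

section
/- Let ν ≥ 0, α > 0, x > 0, and let f : (0,∞) → ℝ be continuous with compact support contained in (0,∞). Then the fractional Bessel integral coincides, after the substitution y² = t, with 2^{−2α} times the Saigo fractional integral J_{x²}^{2α, (ν−1)/2−α, −α} applied to t ↦ t^{(ν−1)/2} f(√t); explicitly, (IB_{ν,-}^α f)(x) = (2^{−2α}/Γ(2α)) ∫_{x²}^∞ (t − x²)^{2α−1} t^{−α} ₂F₁(α + (ν−1)/2, α; 2α; 1 − x²/t) f(√t) dt. -/
open MeasureTheory Set

/-- Saigo fractional integral J_x^{γ,β,η}. -/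
noncomputable def saigo (γ β η : ℝ) (f : ℝ → ℝ) (x : ℝ) : ℝ :=
  (1 / Real.Gamma γ) *
    ∫ t in Ioi x, (t - x) ^ (γ - 1) * t ^ (-γ - β) *
      gaussHyp (γ + β) (-η) γ (1 - x / t) * f t

theorem IB_eq_saigo (ν α x : ℝ) (hν : 0 ≤ ν) (hα : 0 < α) (hx : 0 < x)
    (f : ℝ → ℝ) (hf : Continuous f) (hsupp : HasCompactSupport f)
    (hsupp' : tsupport f ⊆ Ioi (0 : ℝ)) :
    IB ν α f x =
      (2 : ℝ) ^ (-(2 * α)) *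
        saigo (2 * α) ((ν - 1) / 2 - α) (-α) (fun t => t ^ ((ν - 1) / 2) * f (Real.sqrt t)) (x ^ 2) ∧
    IB ν α f x =
      ((2 : ℝ) ^ (-(2 * α)) / Real.Gamma (2 * α)) *
        ∫ t in Ioi (x ^ 2), (t - x ^ 2) ^ (2 * α - 1) * t ^ (-α) *
          gaussHyp (α + (ν - 1) / 2) α (2 * α) (1 - x ^ 2 / t) * f (Real.sqrt t) := by
  -- the image of `Ioi x` under squaring is `Ioi (x^2)`
  have himg : (fun y : ℝ => y ^ 2) '' Ioi x = Ioi (x ^ 2) := by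
    ext t
    constructor
    · rintro ⟨y, hy, rfl⟩
      exact mem_Ioi.mpr (pow_lt_pow_left₀ (mem_Ioi.mp hy) hx.le (by norm_num))
    · intro ht
      have ht0 : (0:ℝ) ≤ t := le_trans (by positivity) (mem_Ioi.mp ht).le
      refine ⟨Real.sqrt t, ?_, by simp [Real.sq_sqrt ht0]⟩
      have : Real.sqrt (x ^ 2) < Real.sqrt t := Real.sqrt_lt_sqrt (by positivity) (mem_Ioi.mp ht)
      rwa [Real.sqrt_sq hx.le] at this
  set G : ℝ → ℝ := fun t => (t - x ^ 2) ^ (2 * α - 1) * t ^ (-α) *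
      gaussHyp (α + (ν - 1) / 2) α (2 * α) (1 - x ^ 2 / t) * f (Real.sqrt t) with hG
  have hchg : ∫ t in Ioi (x ^ 2), G t = ∫ y in Ioi x, |2 * y| • G (y ^ 2) := by
    rw [← himg]
    refine integral_image_eq_integral_abs_deriv_smul measurableSet_Ioi
      (fun y _ => ?_) (fun a ha b hb h => ?_) G
    · simpa using (hasDerivAt_pow 2 y).hasDerivWithinAt
    · have ha0 : 0 < a := lt_trans hx (mem_Ioi.mp ha)
      have hb0 : 0 < b := lt_trans hx (mem_Ioi.mp hb)
      have := congrArg Real.sqrt h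
      rwa [Real.sqrt_sq ha0.le, Real.sqrt_sq hb0.le] at this
  -- pointwise identity on `Ioi x`
  have hpt : ∀ y ∈ Ioi x,
      ((y ^ 2 - x ^ 2) / (2 * y)) ^ (2 * α - 1) *
        gaussHyp (α + (ν - 1) / 2) α (2 * α) (1 - x ^ 2 / y ^ 2) * f y
      = (2 : ℝ) ^ (-(2 * α)) * (|2 * y| • G (y ^ 2)) := by
    intro y hy
    have hy0 : 0 < y := lt_trans hx (mem_Ioi.mp hy)
    have hyx : 0 ≤ y ^ 2 - x ^ 2 := by nlinarith [mem_Ioi.mp hy]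
    have h2y : (0:ℝ) < 2 * y := by linarith
    have hsq : Real.sqrt (y ^ 2) = y := Real.sqrt_sq hy0.le
    have hpow : ((y ^ 2 : ℝ)) ^ (-α) = y ^ (-(2 * α)) := by
      rw [← Real.rpow_natCast y 2, ← Real.rpow_mul hy0.le]
      norm_num
    have hdiv : ((y ^ 2 - x ^ 2) / (2 * y)) ^ (2 * α - 1)
        = (y ^ 2 - x ^ 2) ^ (2 * α - 1) * (2 * y) ^ (-(2 * α - 1)) := by
      rw [Real.div_rpow hyx h2y.le, Real.rpow_neg h2y.le, div_eq_mul_inv]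
    have hc : (2 : ℝ) ^ (-(2 * α)) * (2 * y) * y ^ (-(2 * α)) = (2 * y) ^ (-(2 * α - 1)) := by
      rw [Real.mul_rpow (by norm_num : (0:ℝ) ≤ 2) hy0.le]
      rw [show -(2 * α - 1) = -(2 * α) + 1 by ring, Real.rpow_add (by norm_num : (0:ℝ) < 2),
        Real.rpow_add hy0, Real.rpow_one, Real.rpow_one]
      ring
    simp only [hG, smul_eq_mul, abs_of_pos h2y, hsq, hpow, hdiv]
    rw [← hc]
    ring
  have key : ∫ y in Ioi x, ((y ^ 2 - x ^ 2) / (2 * y)) ^ (2 * α - 1) *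
        gaussHyp (α + (ν - 1) / 2) α (2 * α) (1 - x ^ 2 / y ^ 2) * f y
      = (2 : ℝ) ^ (-(2 * α)) * ∫ t in Ioi (x ^ 2), G t := by
    rw [hchg, ← MeasureTheory.integral_const_mul]
    refine setIntegral_congr_fun measurableSet_Ioi (fun y hy => ?_)
    simpa using hpt y hy
  have h2 : IB ν α f x =
      ((2 : ℝ) ^ (-(2 * α)) / Real.Gamma (2 * α)) *
        ∫ t in Ioi (x ^ 2), (t - x ^ 2) ^ (2 * α - 1) * t ^ (-α) *
          gaussHyp (α + (ν - 1) / 2) α (2 * α) (1 - x ^ 2 / t) * f (Real.sqrt t) := by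
    rw [IB, key]
    ring
  refine ⟨?_, h2⟩
  rw [h2, saigo]
  have hsint : ∫ t in Ioi (x ^ 2), (t - x ^ 2) ^ (2 * α - 1) * t ^ (-(2 * α) - ((ν - 1) / 2 - α)) *
        gaussHyp (2 * α + ((ν - 1) / 2 - α)) (- -α) (2 * α) (1 - x ^ 2 / t) *
        (t ^ ((ν - 1) / 2) * f (Real.sqrt t))
      = ∫ t in Ioi (x ^ 2), (t - x ^ 2) ^ (2 * α - 1) * t ^ (-α) *
          gaussHyp (α + (ν - 1) / 2) α (2 * α) (1 - x ^ 2 / t) * f (Real.sqrt t) := by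
    refine setIntegral_congr_fun measurableSet_Ioi (fun t ht => ?_)
    have ht0 : 0 < t := lt_trans (by positivity) (mem_Ioi.mp ht)
    have hexp : t ^ (-(2 * α) - ((ν - 1) / 2 - α)) * t ^ ((ν - 1) / 2) = t ^ (-α) := by
      rw [← Real.rpow_add ht0]
      ring_nf
    have harg : 2 * α + ((ν - 1) / 2 - α) = α + (ν - 1) / 2 := by ring
    rw [harg, neg_neg]
    rw [show (t - x ^ 2) ^ (2 * α - 1) * t ^ (-(2 * α) - ((ν - 1) / 2 - α)) *
        gaussHyp (α + (ν - 1) / 2) α (2 * α) (1 - x ^ 2 / t) *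
        (t ^ ((ν - 1) / 2) * f (Real.sqrt t))
      = (t - x ^ 2) ^ (2 * α - 1) *
        (t ^ (-(2 * α) - ((ν - 1) / 2 - α)) * t ^ ((ν - 1) / 2)) *
        gaussHyp (α + (ν - 1) / 2) α (2 * α) (1 - x ^ 2 / t) * f (Real.sqrt t) by ring, hexp]
  rw [hsint]
  ring
end
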